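/- Constant-stepsize bound on the gradient-average deviation (key estimate in the saddle-avoidance proof): Let x^{k+1} = (W ⊗ I_d)(x^k − λ(g^k + N^k)) with constant stepsize λ > 0, W symmetric doubly stochastic, η := ‖W − (1/m)𝟏𝟏ᵀ‖ ∈ (0,1), g_i^k = ∇f_i(x_i^k) where each ∇f_i is ν-Lipschitz and ‖∇f_i‖ ≤ G everywhere, and averages x̄^k := (1/m)Σ_i x_i^k. Let q^k := (1/m)Σ_{i=1}^m g_i^k − ∇F(x̄^k) with F := (1/m)Σ f_i. If the noise satisfies ‖N^l‖ ≤ T for all l ≤ k−1, then ‖q^k‖ ≤ (ν η^k/√m) ‖x^0 − x̄^0 ⊗ 𝟏‖ + (ν λ/√m) · ((1 − η^k)/(1 − η)) · (√m G + T). -/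

import Mathlib

open scoped Matrix NNReal

/-- The Euclidean norm of the stacked vector `(y 1, …, y m) ∈ ℝ^{md}`. -/
noncomputable def stackedNorm {m d : ℕ} (y : Fin m → EuclideanSpace ℝ (Fin d)) : ℝ :=
  Real.sqrt (∑ i, ‖y i‖ ^ 2)

section aux
variable {m d : ℕ}

lemma stackedNorm_eq_norm (y : Fin m → EuclideanSpace ℝ (Fin d)) :
    stackedNorm y = ‖(WithLp.equiv 2 (Fin m → EuclideanSpace ℝ (Fin d))).symm y‖ := by
  rw [PiLp.norm_eq_of_L2]; rfl

lemma stackedNorm_nonneg (y : Fin m → EuclideanSpace ℝ (Fin d)) : 0 ≤ stackedNorm y :=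
  Real.sqrt_nonneg _

lemma stackedNorm_sub_le (a b : Fin m → EuclideanSpace ℝ (Fin d)) :
    stackedNorm (fun i => a i - b i) ≤ stackedNorm a + stackedNorm b := by
  rw [stackedNorm_eq_norm, stackedNorm_eq_norm, stackedNorm_eq_norm]
  exact norm_sub_le ((WithLp.equiv 2 (Fin m → EuclideanSpace ℝ (Fin d))).symm a)
    ((WithLp.equiv 2 (Fin m → EuclideanSpace ℝ (Fin d))).symm b)

lemma stackedNorm_add_le (a b : Fin m → EuclideanSpace ℝ (Fin d)) :
    stackedNorm (fun i => a i + b i) ≤ stackedNorm a + stackedNorm b := by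
  rw [stackedNorm_eq_norm, stackedNorm_eq_norm, stackedNorm_eq_norm]
  exact norm_add_le ((WithLp.equiv 2 (Fin m → EuclideanSpace ℝ (Fin d))).symm a)
    ((WithLp.equiv 2 (Fin m → EuclideanSpace ℝ (Fin d))).symm b)

lemma stackedNorm_smul (t : ℝ) (y : Fin m → EuclideanSpace ℝ (Fin d)) :
    stackedNorm (fun i => t • y i) = |t| * stackedNorm y := by
  rw [stackedNorm_eq_norm, stackedNorm_eq_norm]
  have : (WithLp.equiv 2 (Fin m → EuclideanSpace ℝ (Fin d))).symm (fun i => t • y i)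
      = t • (WithLp.equiv 2 (Fin m → EuclideanSpace ℝ (Fin d))).symm y := rfl
  rw [this, norm_smul, Real.norm_eq_abs]

lemma stackedNorm_le_of_forall (y : Fin m → EuclideanSpace ℝ (Fin d)) (C : ℝ) (hC : 0 ≤ C)
    (h : ∀ i, ‖y i‖ ≤ C) : stackedNorm y ≤ Real.sqrt m * C := by
  unfold stackedNorm
  have : ∑ i, ‖y i‖ ^ 2 ≤ (m : ℝ) * C ^ 2 := by
    calc ∑ i, ‖y i‖ ^ 2 ≤ ∑ _i : Fin m, C ^ 2 :=
          Finset.sum_le_sum fun i _ => pow_le_pow_left₀ (norm_nonneg _) (h i) 2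
      _ = (m : ℝ) * C ^ 2 := by simp [mul_comm]
  calc Real.sqrt (∑ i, ‖y i‖ ^ 2) ≤ Real.sqrt ((m : ℝ) * C ^ 2) := Real.sqrt_le_sqrt this
    _ = Real.sqrt m * C := by rw [Real.sqrt_mul (by positivity), Real.sqrt_sq hC]

lemma sum_norm_le_sqrt (y : Fin m → EuclideanSpace ℝ (Fin d)) :
    ∑ i, ‖y i‖ ≤ Real.sqrt m * stackedNorm y := by
  have h := sq_sum_le_card_mul_sum_sq (s := (Finset.univ : Finset (Fin m)))
    (f := fun i => ‖y i‖)
  simp only [Finset.card_univ, Fintype.card_fin] at h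
  calc ∑ i, ‖y i‖ = Real.sqrt ((∑ i, ‖y i‖) ^ 2) := by
        rw [Real.sqrt_sq (by positivity)]
    _ ≤ Real.sqrt ((m : ℝ) * ∑ i, ‖y i‖ ^ 2) := Real.sqrt_le_sqrt (by exact_mod_cast h)
    _ = Real.sqrt m * stackedNorm y := by
        rw [Real.sqrt_mul (by positivity)]; rfl

lemma gradient_avg (f : Fin m → EuclideanSpace ℝ (Fin d) → ℝ)
    (hdiff : ∀ i, Differentiable ℝ (f i)) (c : ℝ) (θ : EuclideanSpace ℝ (Fin d)) :
    gradient (fun θ => c * ∑ i, f i θ) θ = c • ∑ i, gradient (f i) θ := by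
  have hsum : DifferentiableAt ℝ (fun θ => ∑ i, f i θ) θ :=
    DifferentiableAt.fun_sum fun i _ => (hdiff i).differentiableAt
  have h1 : fderiv ℝ (fun θ => c * ∑ i, f i θ) θ
      = c • fderiv ℝ (fun θ => ∑ i, f i θ) θ := fderiv_const_mul hsum c
  have h2 : fderiv ℝ (fun θ => ∑ i, f i θ) θ = ∑ i, fderiv ℝ (f i) θ :=
    fderiv_fun_sum fun i _ => (hdiff i).differentiableAt
  show (InnerProductSpace.toDual ℝ _).symm _ = _
  rw [h1, h2, map_smul, map_sum]
  rfl

lemma norm_sq_euc (w : EuclideanSpace ℝ (Fin d)) : ‖w‖ ^ 2 = ∑ c, (w c) ^ 2 := by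
  rw [EuclideanSpace.norm_eq, Real.sq_sqrt (by positivity)]
  simp [sq_abs]

lemma stacked_contract (A : Matrix (Fin m) (Fin m) ℝ)
    (v : Fin m → EuclideanSpace ℝ (Fin d)) :
    stackedNorm (fun i => ∑ j, A i j • v j)
      ≤ ‖Matrix.toEuclideanCLM (𝕜 := ℝ) (n := Fin m) A‖ * stackedNorm v := by
  set η := ‖Matrix.toEuclideanCLM (𝕜 := ℝ) (n := Fin m) A‖ with hη
  have hη0 : 0 ≤ η := norm_nonneg _
  unfold stackedNorm
  rw [show η * Real.sqrt (∑ i, ‖v i‖ ^ 2) = Real.sqrt (η ^ 2 * ∑ i, ‖v i‖ ^ 2) by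
    rw [Real.sqrt_mul (by positivity), Real.sqrt_sq hη0]]
  apply Real.sqrt_le_sqrt
  have key : ∀ c : Fin d, ∑ i, (∑ j, A i j * v j c) ^ 2 ≤ η ^ 2 * ∑ j, (v j c) ^ 2 := by
    intro c
    have h1 : ‖Matrix.toEuclideanCLM (𝕜 := ℝ) (n := Fin m) A
        ((WithLp.equiv 2 (Fin m → ℝ)).symm (fun j => v j c))‖
        ≤ η * ‖(WithLp.equiv 2 (Fin m → ℝ)).symm (fun j => v j c)‖ :=
      ContinuousLinearMap.le_opNorm _ _
    have h2 : Matrix.toEuclideanCLM (𝕜 := ℝ) (n := Fin m) A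
        ((WithLp.equiv 2 (Fin m → ℝ)).symm (fun j => v j c))
        = (WithLp.equiv 2 (Fin m → ℝ)).symm (fun i => ∑ j, A i j * v j c) := by
      exact rfl
    rw [h2] at h1
    have h3 := pow_le_pow_left₀ (norm_nonneg _) h1 2
    rw [mul_pow] at h3
    calc ∑ i, (∑ j, A i j * v j c) ^ 2
        = ‖(WithLp.equiv 2 (Fin m → ℝ)).symm (fun i => ∑ j, A i j * v j c)‖ ^ 2 := by
          rw [norm_sq_euc]; rfl
      _ ≤ η ^ 2 * ‖(WithLp.equiv 2 (Fin m → ℝ)).symm (fun j => v j c)‖ ^ 2 := h3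
      _ = η ^ 2 * ∑ j, (v j c) ^ 2 := by rw [norm_sq_euc]; rfl
  calc ∑ i, ‖∑ j, A i j • v j‖ ^ 2
      = ∑ i, ∑ c, (∑ j, A i j * v j c) ^ 2 := by
        refine Finset.sum_congr rfl fun i _ => ?_
        rw [norm_sq_euc]
        refine Finset.sum_congr rfl fun c _ => ?_
        congr 1
        show (∑ j, A i j • v j) c = _
        rw [show (∑ j, A i j • v j) c = ∑ j, (A i j • v j) c from
          by rw [WithLp.ofLp_sum, Finset.sum_apply]]
        rfl
    _ ≤ η ^ 2 * ∑ i, ‖v i‖ ^ 2 := by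
        rw [Finset.sum_comm]
        calc ∑ c, ∑ i, (∑ j, A i j * v j c) ^ 2 ≤ ∑ c : Fin d, η ^ 2 * ∑ j, (v j c) ^ 2 :=
              Finset.sum_le_sum fun c _ => key c
          _ = η ^ 2 * ∑ i, ‖v i‖ ^ 2 := by
              rw [← Finset.mul_sum, Finset.sum_comm]
              congr 1
              exact Finset.sum_congr rfl fun i _ => (norm_sq_euc _).symm

end aux

/-- **Constant-stepsize bound on the gradient-average deviation** (key estimate in the
saddle-avoidance proof of Theorem 3): for the dynamics
`x^{k+1} = (W ⊗ I_d)(x^k - λ(g^k + N^k))` with constant stepsize `λ > 0`, `ν`-Lipschitz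
`G`-bounded gradients, `η = ‖W - (1/m)𝟙𝟙ᵀ‖ ∈ (0,1)`, and noise satisfying `‖N^l‖ ≤ T`
 for all `l ≤ k-1`, the deviation `q^k = (1/m)∑ g_i^k - ∇F(x̄^k)` satisfies
`‖q^k‖ ≤ (νη^k/√m)‖x^0 - x̄^0 ⊗ 𝟙‖ + (νλ/√m)((1-η^k)/(1-η))(√m G + T)`. -/
theorem constant_stepsize_deviation_bound
    {m d : ℕ} (hm : 0 < m)
    (W : Matrix (Fin m) (Fin m) ℝ)
    (hWsymm : W.IsSymm)
    (hWnonneg : ∀ i j, 0 ≤ W i j)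
    (hWrow : W *ᵥ (fun _ => (1 : ℝ)) = fun _ => 1)
    (hWcol : (fun _ => (1 : ℝ)) ᵥ* W = fun _ => 1)
    (η : ℝ)
    (hη : η = ‖Matrix.toEuclideanCLM (𝕜 := ℝ) (n := Fin m)
        (W - (m : ℝ)⁻¹ • Matrix.of (fun _ _ => (1 : ℝ)))‖)
    (hη0 : 0 < η) (hη1 : η < 1)
    (f : Fin m → EuclideanSpace ℝ (Fin d) → ℝ)
    (hdiff : ∀ i, Differentiable ℝ (f i))
    (ν G : ℝ≥0)
    (hLip : ∀ i, LipschitzWith ν (gradient (f i)))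
    (hG : ∀ i θ, ‖gradient (f i) θ‖ ≤ (G : ℝ))
    (lam : ℝ) (hlam : 0 < lam)
    (N : ℕ → Fin m → EuclideanSpace ℝ (Fin d))
    (x : ℕ → Fin m → EuclideanSpace ℝ (Fin d))
    (hx : ∀ k i, x (k + 1) i =
      ∑ j, W i j • (x k j - lam • (gradient (f j) (x k j) + N k j)))
    (k : ℕ) (T : ℝ)
    (hN : ∀ l < k, stackedNorm (N l) ≤ T) :
    ‖(m : ℝ)⁻¹ • ∑ i, gradient (f i) (x k i)
        - gradient (fun θ => (m : ℝ)⁻¹ * ∑ i, f i θ) ((m : ℝ)⁻¹ • ∑ i', x k i')‖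
      ≤ ((ν : ℝ) * η ^ k / Real.sqrt m) *
          stackedNorm (fun i => x 0 i - (m : ℝ)⁻¹ • ∑ i', x 0 i')
        + ((ν : ℝ) * lam / Real.sqrt m) * ((1 - η ^ k) / (1 - η)) *
          (Real.sqrt m * (G : ℝ) + T) := by
  have hm' : (0 : ℝ) < m := by exact_mod_cast hm
  have hsm : (0 : ℝ) < Real.sqrt m := Real.sqrt_pos.mpr hm'
  set A : Matrix (Fin m) (Fin m) ℝ :=
    W - (m : ℝ)⁻¹ • Matrix.of (fun _ _ => (1 : ℝ)) with hA
  set g : ℕ → Fin m → EuclideanSpace ℝ (Fin d) :=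
    fun n j => gradient (f j) (x n j) with hg
  set xb : ℕ → EuclideanSpace ℝ (Fin d) := fun n => (m : ℝ)⁻¹ • ∑ i', x n i' with hxb
  set e : ℕ → Fin m → EuclideanSpace ℝ (Fin d) := fun n i => x n i - xb n with he
  have hAij : ∀ i j, A i j = W i j - (m : ℝ)⁻¹ := by
    intro i j
    simp [hA, Matrix.sub_apply, Matrix.smul_apply, Matrix.of_apply]
  have hWrowsum : ∀ i, ∑ j, W i j = 1 := by
    intro i
    have := congrFun hWrow i
    simpa [Matrix.mulVec, dotProduct] using this
  have hWcolsum : ∀ j, ∑ i, W i j = 1 := by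
    intro j
    have := congrFun hWcol j
    simpa [Matrix.vecMul, dotProduct] using this
  have hArowsum : ∀ i, ∑ j, A i j = 0 := by
    intro i
    simp only [hAij]
    rw [Finset.sum_sub_distrib, hWrowsum]
    simp [Finset.card_univ]
    field_simp
    norm_num
  -- the recursion for the deviation vector
  have step1 : ∀ n i, e (n + 1) i
      = ∑ j, A i j • (e n j - lam • (g n j + N n j)) := by
    intro n i
    set u : Fin m → EuclideanSpace ℝ (Fin d) :=
      fun j => x n j - lam • (g n j + N n j) with hu
    have h1 : x (n + 1) i = ∑ j, W i j • u j := hx n i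
    have h2 : (∑ i', x (n + 1) i') = ∑ j, u j := by
      rw [Finset.sum_congr rfl (fun i' _ => hx n i')]
      rw [Finset.sum_comm]
      refine Finset.sum_congr rfl fun j _ => ?_
      rw [← Finset.sum_smul, hWcolsum j, one_smul]
    have h3 : xb (n + 1) = ∑ j, (m : ℝ)⁻¹ • u j := by
      rw [hxb]; simp only []
      rw [h2, Finset.smul_sum]
    have h4 : e (n + 1) i = ∑ j, (W i j - (m : ℝ)⁻¹) • u j := by
      rw [he]; simp only []
      rw [h1, h3, ← Finset.sum_sub_distrib]
      exact Finset.sum_congr rfl fun j _ => (sub_smul _ _ _).symm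
    rw [h4]
    have h5 : ∀ j, u j = (e n j - lam • (g n j + N n j)) + xb n := by
      intro j; rw [he, hu]; simp only []; abel
    calc ∑ j, (W i j - (m : ℝ)⁻¹) • u j
        = ∑ j, ((W i j - (m : ℝ)⁻¹) • (e n j - lam • (g n j + N n j))
            + (W i j - (m : ℝ)⁻¹) • xb n) := by
          refine Finset.sum_congr rfl fun j _ => ?_
          rw [h5 j, smul_add]
      _ = (∑ j, (W i j - (m : ℝ)⁻¹) • (e n j - lam • (g n j + N n j)))
            + (∑ j, (W i j - (m : ℝ)⁻¹)) • xb n := by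
          rw [Finset.sum_add_distrib, Finset.sum_smul]
      _ = ∑ j, A i j • (e n j - lam • (g n j + N n j)) := by
          have : (∑ j, (W i j - (m : ℝ)⁻¹)) = 0 := by
            have := hArowsum i; simpa [hAij] using this
          rw [this, zero_smul, add_zero]
          exact Finset.sum_congr rfl fun j _ => by rw [hAij]
  -- per-step contraction bound
  have hB : ∀ n, n < k →
      stackedNorm (e (n + 1)) ≤ η * (stackedNorm (e n)
        + lam * (Real.sqrt m * (G : ℝ) + T)) := by
    intro n hn
    have hrec : (fun i => e (n + 1) i)
        = fun i => ∑ j, A i j • (e n j - lam • (g n j + N n j)) :=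
      funext (step1 n)
    have hc : stackedNorm (e (n + 1))
        ≤ η * stackedNorm (fun j => e n j - lam • (g n j + N n j)) := by
      have := stacked_contract (m := m) (d := d) A
        (fun j => e n j - lam • (g n j + N n j))
      rw [hη]
      calc stackedNorm (e (n + 1))
          = stackedNorm (fun i => ∑ j, A i j • (e n j - lam • (g n j + N n j))) := by
            rw [show e (n+1) = fun i => e (n+1) i from rfl, hrec]
        _ ≤ _ := this
    refine hc.trans (mul_le_mul_of_nonneg_left ?_ (le_of_lt hη0))
    have t1 : stackedNorm (fun j => e n j - lam • (g n j + N n j))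
        ≤ stackedNorm (e n) + stackedNorm (fun j => lam • (g n j + N n j)) :=
      stackedNorm_sub_le _ _
    have t2 : stackedNorm (fun j => lam • (g n j + N n j))
        = lam * stackedNorm (fun j => g n j + N n j) := by
      rw [stackedNorm_smul, abs_of_pos hlam]
    have t3 : stackedNorm (fun j => g n j + N n j)
        ≤ stackedNorm (g n) + stackedNorm (N n) := stackedNorm_add_le _ _
    have t4 : stackedNorm (g n) ≤ Real.sqrt m * (G : ℝ) :=
      stackedNorm_le_of_forall _ _ (G.coe_nonneg) fun i => hG i (x n i)
    have t5 : stackedNorm (N n) ≤ T := hN n hn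
    calc stackedNorm (fun j => e n j - lam • (g n j + N n j))
        ≤ stackedNorm (e n) + lam * stackedNorm (fun j => g n j + N n j) := by
          rw [← t2]; exact t1
      _ ≤ stackedNorm (e n) + lam * (Real.sqrt m * (G : ℝ) + T) := by
          have : stackedNorm (fun j => g n j + N n j) ≤ Real.sqrt m * (G : ℝ) + T :=
            t3.trans (add_le_add t4 t5)
          nlinarith [hlam]
  -- inductive bound
  set B : ℝ := lam * (Real.sqrt m * (G : ℝ) + T) with hBdef
  have main : ∀ n, n ≤ k → stackedNorm (e n)
      ≤ η ^ n * stackedNorm (e 0) + (∑ l ∈ Finset.range n, η ^ (l + 1)) * B := by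
    intro n
    induction n with
    | zero => intro _; simp
    | succ n ih =>
      intro hn
      have hn' : n < k := Nat.lt_of_succ_le hn
      have ihn := ih (le_of_lt hn')
      have hstep := hB n hn'
      have hgeom : (∑ l ∈ Finset.range (n + 1), η ^ (l + 1))
          = η * (∑ l ∈ Finset.range n, η ^ (l + 1)) + η := by
        rw [Finset.sum_range_succ', Finset.mul_sum]
        congr 1
        · exact Finset.sum_congr rfl fun l _ => by ring
        · norm_num
      calc stackedNorm (e (n + 1)) ≤ η * (stackedNorm (e n) + B) := hstep
        _ ≤ η * ((η ^ n * stackedNorm (e 0)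
              + (∑ l ∈ Finset.range n, η ^ (l + 1)) * B) + B) := by
            apply mul_le_mul_of_nonneg_left _ (le_of_lt hη0)
            exact add_le_add_left ihn B
        _ = η ^ (n + 1) * stackedNorm (e 0)
              + (∑ l ∈ Finset.range (n + 1), η ^ (l + 1)) * B := by
            rw [hgeom]; ring
  have hmain := main k le_rfl
  -- geometric sum comparison
  have hgeomle : (∑ l ∈ Finset.range k, η ^ (l + 1)) * B
      ≤ ((1 - η ^ k) / (1 - η)) * B := by
    rcases Nat.eq_zero_or_pos k with hk0 | hkpos
    · subst hk0; simp
    · have hT : 0 ≤ T := le_trans (stackedNorm_nonneg (N 0)) (hN 0 hkpos)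
      have hBpos : 0 ≤ B := by
        apply mul_nonneg (le_of_lt hlam)
        positivity
      apply mul_le_mul_of_nonneg_right _ hBpos
      have h1 : (∑ l ∈ Finset.range k, η ^ (l + 1))
          = η * ∑ l ∈ Finset.range k, η ^ l := by
        rw [Finset.mul_sum]
        exact Finset.sum_congr rfl fun l _ => by ring
      have h2 : (∑ l ∈ Finset.range k, η ^ l) = (1 - η ^ k) / (1 - η) := by
        rw [geom_sum_eq (ne_of_lt hη1)]
        rw [div_eq_div_iff (by linarith) (by linarith)]
        ring
      rw [h1, h2]
      have hge : 0 ≤ (1 - η ^ k) / (1 - η) := by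
        apply div_nonneg _ (by linarith)
        have : η ^ k ≤ 1 := pow_le_one₀ (le_of_lt hη0) (le_of_lt hη1)
        linarith
      nlinarith
  -- from deviation norm to gradient deviation
  have hq : ‖(m : ℝ)⁻¹ • ∑ i, gradient (f i) (x k i)
      - gradient (fun θ => (m : ℝ)⁻¹ * ∑ i, f i θ) (xb k)‖
      ≤ ((ν : ℝ) / Real.sqrt m) * stackedNorm (e k) := by
    rw [gradient_avg f hdiff]
    have hsplit : (m : ℝ)⁻¹ • ∑ i, gradient (f i) (x k i)
        - (m : ℝ)⁻¹ • ∑ i, gradient (f i) (xb k)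
        = (m : ℝ)⁻¹ • ∑ i, (gradient (f i) (x k i) - gradient (f i) (xb k)) := by
      rw [← smul_sub, Finset.sum_sub_distrib]
    rw [hsplit, norm_smul]
    have h6 : ‖∑ i, (gradient (f i) (x k i) - gradient (f i) (xb k))‖
        ≤ (ν : ℝ) * ∑ i, ‖e k i‖ := by
      calc ‖∑ i, (gradient (f i) (x k i) - gradient (f i) (xb k))‖
          ≤ ∑ i, ‖gradient (f i) (x k i) - gradient (f i) (xb k)‖ :=
            norm_sum_le _ _
        _ ≤ ∑ i, (ν : ℝ) * ‖e k i‖ := by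
            refine Finset.sum_le_sum fun i _ => ?_
            have := (hLip i).dist_le_mul (x k i) (xb k)
            rw [dist_eq_norm, dist_eq_norm] at this
            exact this
        _ = (ν : ℝ) * ∑ i, ‖e k i‖ := by rw [Finset.mul_sum]
    have h7 : ∑ i, ‖e k i‖ ≤ Real.sqrt m * stackedNorm (e k) := sum_norm_le_sqrt _
    have h8 : ‖(m : ℝ)⁻¹‖ = (m : ℝ)⁻¹ := by
      rw [Real.norm_eq_abs, abs_of_pos (by positivity)]
    rw [h8]
    calc (m : ℝ)⁻¹ * ‖∑ i, (gradient (f i) (x k i) - gradient (f i) (xb k))‖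
        ≤ (m : ℝ)⁻¹ * ((ν : ℝ) * (Real.sqrt m * stackedNorm (e k))) := by
          apply mul_le_mul_of_nonneg_left _ (by positivity)
          exact h6.trans (mul_le_mul_of_nonneg_left h7 ν.coe_nonneg)
      _ = ((ν : ℝ) / Real.sqrt m) * stackedNorm (e k) := by
          have key : (m : ℝ)⁻¹ * Real.sqrt m = (Real.sqrt m)⁻¹ := by
            have h := Real.mul_self_sqrt (le_of_lt hm')
            field_simp
            rw [sq]; exact h
          rw [div_eq_mul_inv, ← key]
          ring
  -- final combination
  have hfin : stackedNorm (e k) ≤ η ^ k * stackedNorm (e 0)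
      + ((1 - η ^ k) / (1 - η)) * B := hmain.trans (by linarith)
  have hnn : (0 : ℝ) ≤ (ν : ℝ) / Real.sqrt m := by positivity
  calc ‖(m : ℝ)⁻¹ • ∑ i, gradient (f i) (x k i)
        - gradient (fun θ => (m : ℝ)⁻¹ * ∑ i, f i θ) ((m : ℝ)⁻¹ • ∑ i', x k i')‖
      ≤ ((ν : ℝ) / Real.sqrt m) * stackedNorm (e k) := hq
    _ ≤ ((ν : ℝ) / Real.sqrt m) * (η ^ k * stackedNorm (e 0)
          + ((1 - η ^ k) / (1 - η)) * B) := mul_le_mul_of_nonneg_left hfin hnn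
    _ = ((ν : ℝ) * η ^ k / Real.sqrt m) * stackedNorm (e 0)
        + ((ν : ℝ) * lam / Real.sqrt m) * ((1 - η ^ k) / (1 - η)) *
          (Real.sqrt m * (G : ℝ) + T) := by
        rw [hBdef]; ring
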